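/- Let X be a compact metric space, Z ⊆ X nonempty, and b = (b_k)_{k≥0} a positive sequence with λ_b := 25·sup_k(b_k/b_{k−1}) < 1. Suppose X contains pairwise disjoint pieces X_k (k ∈ ℕ ∪ {ω}) covering X with dist(X_k, X_j) ≥ b_{k−1} − 2b_k − b_{k+1} for k < j, and set Z_k := Z ∩ X_k. Suppose for every integer k ≥ 2 there is h_k : Z → X with Lip(h_k) ≤ λ_b/4 and d(h_k(x), h_j(x)) ≤ 2 b_{k−1} for all 2 ≤ k < j < ω and x ∈ Z, and let h_ω(x) := lim_{k→∞} h_k(x). Define F : Z × Z → X by F(x,y) := h_{k+1}(x) when y ∈ Z_k (with ω+1 = ω). Then F is well-defined, Lip(F) ≤ λ_b/2 (with respect to the max metric on Z × Z), and F(Z × Z) = ⋃{h_k(Z) : 2 ≤ k ≤ ω, Z_{k−1} ≠ ∅}. -/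
import Mathlib


/-- Lemma 2.10: given maps `h k : Z → X` (`k ≥ 2`) with
`Lip(h k) ≤ λ_b/4`, `d(h k x, h j x) ≤ 2 b (k-1)` for `2 ≤ k < j`, limit map
`h_ω`, and the piecewise map `F(x,y) = h (k+1) x` for `y ∈ Z_k := Z ∩ X k`
(`F(x,y) = h_ω x` for `y ∈ Z_ω`), the map `F` is `λ_b/2`-Lipschitz (max
metric on `Z × Z`) and
`F(Z × Z) = ⋃ {h k (Z) : 2 ≤ k ≤ ω, Z_{k-1} ≠ ∅}`. -/
theorem stmt_11 {X : Type*} [MetricSpace X] [CompactSpace X]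
    (Z : Set X) (hZ : Z.Nonempty)
    (Xf : ℕ → Set X) (Xω : Set X)
    (hcov : ∀ x : X, x ∈ Xω ∨ ∃ k, 1 ≤ k ∧ x ∈ Xf k)
    (hdisj : (∀ k j, 1 ≤ k → k < j → Disjoint (Xf k) (Xf j)) ∧
      ∀ k, 1 ≤ k → Disjoint (Xf k) Xω)
    (b : ℕ → ℝ) (hb : ∀ k, 0 < b k)
    (M : NNReal) (hM : ∀ k, b (k + 1) ≤ (M : ℝ) * b k) (hlam : 25 * M < 1)
    (hdist : ∀ k j, 1 ≤ k → k < j → ∀ x ∈ Xf k, ∀ y ∈ Xf j,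
      b (k - 1) - 2 * b k - b (k + 1) ≤ dist x y)
    (hdistω : ∀ k, 1 ≤ k → ∀ x ∈ Xf k, ∀ y ∈ Xω,
      b (k - 1) - 2 * b k - b (k + 1) ≤ dist x y)
    (h : ℕ → Z → X) (hω : Z → X)
    (hLip : ∀ k, 2 ≤ k → LipschitzWith (25 * M / 4) (h k))
    (hcauchy : ∀ k j, 2 ≤ k → k < j → ∀ x : Z, dist (h k x) (h j x) ≤ 2 * b (k - 1))
    (hlim : ∀ x : Z, Filter.Tendsto (fun k => h k x) Filter.atTop (nhds (hω x)))
    (F : Z × Z → X)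
    (hF : ∀ (x y : Z) (k : ℕ), 1 ≤ k → (y : X) ∈ Xf k → F (x, y) = h (k + 1) x)
    (hFω : ∀ x y : Z, (y : X) ∈ Xω → F (x, y) = hω x) :
    LipschitzWith (25 * M / 2) F ∧
      Set.range F =
        (⋃ k, ⋃ (_ : 2 ≤ k ∧ (Z ∩ Xf (k - 1)).Nonempty), Set.range (h k)) ∪
          ⋃ (_ : (Z ∩ Xω).Nonempty), Set.range hω := by
  classical
  have hM0 : 0 < (M : ℝ) := by nlinarith [hb 0, hb 1, hM 0]
  have hM25 : 25 * (M : ℝ) < 1 := by exact_mod_cast hlam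
  have hK4 : ((25 * M / 4 : NNReal) : ℝ) = 25 * (M : ℝ) / 4 := by push_cast; ring
  have hK2 : ((25 * M / 2 : NNReal) : ℝ) = 25 * (M : ℝ) / 2 := by push_cast; ring
  -- key numeric inequality
  have keyineq : ∀ k : ℕ, 1 ≤ k →
      2 * b k ≤ 25 * (M : ℝ) / 4 * (b (k - 1) - 2 * b k - b (k + 1)) := by
    intro k hk
    have h1 : b k ≤ (M : ℝ) * b (k - 1) := by
      have := hM (k - 1); rwa [Nat.sub_add_cancel hk] at this
    have h2 : b (k + 1) ≤ (M : ℝ) * b k := hM k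
    nlinarith [hb k, hb (k - 1), hb (k + 1), mul_pos hM0 (hb (k - 1)),
      mul_le_mul_of_nonneg_left h1 hM0.le, mul_le_mul_of_nonneg_left h2 hM0.le,
      mul_pos hM0 (hb k)]
  -- Lipschitz bound for the limit map
  have hωLip : ∀ x x' : Z, dist (hω x) (hω x') ≤ 25 * (M : ℝ) / 4 * dist x x' := by
    intro x x'
    refine le_of_tendsto ((hlim x).dist (hlim x')) ?_
    filter_upwards [Filter.eventually_ge_atTop 2] with k hk
    have := (hLip k hk).dist_le_mul x x'
    rwa [hK4] at this
  -- the limit map is within 2 * b k of h (k+1)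
  have hclose : ∀ k : ℕ, 1 ≤ k → ∀ x : Z, dist (h (k + 1) x) (hω x) ≤ 2 * b k := by
    intro k hk x
    refine le_of_tendsto (Filter.Tendsto.dist tendsto_const_nhds (hlim x)) ?_
    filter_upwards [Filter.eventually_ge_atTop (k + 2)] with j hj
    have := hcauchy (k + 1) j (by omega) (by omega) x
    simpa using this
  have hcross : ∀ (x y x' y' : Z) (k : ℕ), 1 ≤ k → ∀ w : X,
      dist (h (k + 1) x') w ≤ 2 * b k →
      b (k - 1) - 2 * b k - b (k + 1) ≤ dist (y : X) (y' : X) →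
      dist (h (k + 1) x) w ≤ 25 * (M : ℝ) / 2 * dist ((x, y) : Z × Z) ((x', y')) := by
    intro x y x' y' k hk w hw hsep
    have hL : dist (h (k + 1) x) (h (k + 1) x') ≤ 25 * (M : ℝ) / 4 * dist x x' := by
      have := (hLip (k + 1) (by omega)).dist_le_mul x x'
      rwa [hK4] at this
    have hdyy : dist y y' = dist (y : X) (y' : X) := Subtype.dist_eq y y'
    have hC : (0 : ℝ) ≤ 25 * (M : ℝ) / 4 := by positivity
    have h2b : 2 * b k ≤ 25 * (M : ℝ) / 4 * dist y y' := by
      calc 2 * b k ≤ 25 * (M : ℝ) / 4 * (b (k - 1) - 2 * b k - b (k + 1)) := keyineq k hk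
        _ ≤ 25 * (M : ℝ) / 4 * dist y y' := by
            rw [hdyy]; exact mul_le_mul_of_nonneg_left hsep hC
    have hmax1 : dist x x' ≤ dist ((x, y) : Z × Z) ((x', y')) := by rw [Prod.dist_eq]; exact le_max_left _ _
    have hmax2 : dist y y' ≤ dist ((x, y) : Z × Z) ((x', y')) := by rw [Prod.dist_eq]; exact le_max_right _ _
    calc dist (h (k + 1) x) w ≤ dist (h (k + 1) x) (h (k + 1) x') + dist (h (k + 1) x') w :=
          dist_triangle _ _ _
      _ ≤ 25 * (M : ℝ) / 4 * dist x x' + 2 * b k := add_le_add hL hw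
      _ ≤ 25 * (M : ℝ) / 4 * dist ((x, y) : Z × Z) ((x', y')) +
          25 * (M : ℝ) / 4 * dist ((x, y) : Z × Z) ((x', y')) := by
          refine add_le_add (mul_le_mul_of_nonneg_left hmax1 hC) (h2b.trans ?_)
          exact mul_le_mul_of_nonneg_left hmax2 hC
      _ = 25 * (M : ℝ) / 2 * dist ((x, y) : Z × Z) ((x', y')) := by ring
  -- easy same-piece bound
  have hsame : ∀ (x x' y y' : Z) (g : Z → X),
      (∀ a a' : Z, dist (g a) (g a') ≤ 25 * (M : ℝ) / 4 * dist a a') →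
      dist (g x) (g x') ≤ 25 * (M : ℝ) / 2 * dist ((x, y) : Z × Z) ((x', y')) := by
    intro x x' y y' g hg
    have h1 := hg x x'
    have hmax1 : dist x x' ≤ dist ((x, y) : Z × Z) ((x', y')) := by rw [Prod.dist_eq]; exact le_max_left _ _
    have hd0 : (0 : ℝ) ≤ dist ((x, y) : Z × Z) ((x', y')) := dist_nonneg
    nlinarith [hM0.le]
  constructor
  · apply LipschitzWith.of_dist_le_mul
    rintro ⟨x, y⟩ ⟨x', y'⟩
    rw [hK2]
    rcases hcov y with hy | ⟨k, hk, hy⟩ <;> rcases hcov y' with hy' | ⟨j, hj, hy'⟩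
    · rw [hFω x y hy, hFω x' y' hy']
      exact hsame x x' y y' hω hωLip
    · -- y in Xω, y' in Xf j : swap
      rw [hFω x y hy, hF x' y' j hj hy', dist_comm, dist_comm ((x, y) : Z × Z)]
      exact hcross x' y' x y j hj (hω x) (hclose j hj x)
        (hdistω j hj y' hy' y hy)
    · rw [hF x y k hk hy, hFω x' y' hy']
      exact hcross x y x' y' k hk (hω x') (hclose k hk x')
        (hdistω k hk y hy y' hy')
    · rcases lt_trichotomy k j with hkj | rfl | hjk
      · rw [hF x y k hk hy, hF x' y' j hj hy']
        refine hcross x y x' y' k hk (h (j + 1) x') ?_ (hdist k j hk hkj y hy y' hy')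
        have := hcauchy (k + 1) (j + 1) (by omega) (by omega) x'
        simpa using this
      · rw [hF x y k hk hy, hF x' y' k hk hy']
        refine hsame x x' y y' (h (k + 1)) ?_
        intro a a'
        have := (hLip (k + 1) (by omega)).dist_le_mul a a'
        rwa [hK4] at this
      · rw [hF x y k hk hy, hF x' y' j hj hy', dist_comm, dist_comm ((x, y) : Z × Z)]
        refine hcross x' y' x y j hj (h (k + 1) x) ?_ (hdist j k hj hjk y' hy' y hy)
        have := hcauchy (j + 1) (k + 1) (by omega) (by omega) x
        simpa using this
  · ext z
    constructor
    · rintro ⟨⟨x, y⟩, rfl⟩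
      rcases hcov y with hy | ⟨k, hk, hy⟩
      · right
        refine Set.mem_iUnion.2 ⟨⟨(y : X), y.2, hy⟩, ?_⟩
        exact ⟨x, (hFω x y hy).symm⟩
      · left
        refine Set.mem_iUnion.2 ⟨k + 1, Set.mem_iUnion.2 ⟨⟨by omega, ⟨(y : X), y.2, by simpa using hy⟩⟩, ?_⟩⟩
        exact ⟨x, (hF x y k hk hy).symm⟩
    · rintro (hmem | hmem)
      · simp only [Set.mem_iUnion] at hmem
        obtain ⟨k, ⟨hk2, ⟨w, hwZ, hwX⟩⟩, x, rfl⟩ := hmem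
        refine ⟨(x, ⟨w, hwZ⟩), ?_⟩
        have hk1 : 1 ≤ k - 1 := by omega
        have := hF x ⟨w, hwZ⟩ (k - 1) hk1 hwX
        rw [this]
        congr 1
        omega
      · simp only [Set.mem_iUnion] at hmem
        obtain ⟨⟨w, hwZ, hwX⟩, x, rfl⟩ := hmem
        exact ⟨(x, ⟨w, hwZ⟩), hFω x ⟨w, hwZ⟩ hwX⟩
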